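/- Let A, B, C be positive integers with D := B² − 4AC > 0, and let q(m,n) = A·m² + B·m·n + C·n². Then √D < B, and the series whose terms are 1/( e(x,y) · e(x,x+y) · e(y,x+y) ), summed over all pairs (x,y) ∈ S, converges and its sum equals (1/D)·( artanh(√D/B)/√D − 1/B ), where artanh is the inverse hyperbolic tangent. (This is the paper's Theorem 6, formula (top4), for the topograph of q rooted at the standard-basis edge, with root edge label e₀ = B.) -/

import Mathlib

/-- The binary quadratic form `q(m,n) = A m² + B m n + C n²`, with real values. -/
noncomputable def q (A B C : ℤ) (v : ℤ × ℤ) : ℝ :=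
  (A : ℝ) * (v.1 : ℝ) ^ 2 + (B : ℝ) * (v.1 : ℝ) * (v.2 : ℝ) + (C : ℝ) * (v.2 : ℝ) ^ 2

/-- The edge label `e(u,v) = q(u+v) − q(u) − q(v)` (twice the polar form of `q`). -/
noncomputable def eLab (A B C : ℤ) (u v : ℤ × ℤ) : ℝ :=
  q A B C (u + v) - q A B C u - q A B C v

/-- Pairs of lattice vectors with nonnegative coordinates and determinant one. -/
def S : Set ((ℤ × ℤ) × (ℤ × ℤ)) :=
  {p | 0 ≤ p.1.1 ∧ 0 ≤ p.1.2 ∧ 0 ≤ p.2.1 ∧ 0 ≤ p.2.2 ∧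
    p.1.1 * p.2.2 - p.1.2 * p.2.1 = 1}

/-- The inverse hyperbolic tangent. -/
noncomputable def artanh (x : ℝ) : ℝ := (1 / 2) * Real.log ((1 + x) / (1 - x))



lemma artanh_upper {x : ℝ} (h0 : 0 ≤ x) (h1 : x < 1) : artanh x ≤ x / (1 - x) := by
  have hx1 : (0:ℝ) < 1 - x := by linarith
  have hpos : 0 < (1 + x) / (1 - x) := by positivity
  have := Real.log_le_sub_one_of_pos hpos
  have harg : (1 + x) / (1 - x) - 1 = 2 * (x / (1 - x)) := by field_simp; ring
  unfold artanh
  rw [harg] at this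
  linarith [this]

lemma artanh_lower {x : ℝ} (h0 : 0 ≤ x) (h1 : x < 1) : x ≤ artanh x := by
  have key : ∀ y ∈ Set.Ico (0:ℝ) 1, 2 * y ≤ Real.log (1 + y) - Real.log (1 - y) := by
    have hmono : MonotoneOn (fun y : ℝ => Real.log (1 + y) - Real.log (1 - y) - 2 * y)
        (Set.Ico (0:ℝ) 1) := by
      have hderiv : ∀ y ∈ interior (Set.Ico (0:ℝ) 1),
          0 ≤ deriv (fun y : ℝ => Real.log (1 + y) - Real.log (1 - y) - 2 * y) y := by
        intro y hy
        rw [interior_Ico] at hy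
        obtain ⟨hy0, hy1⟩ := hy
        have h1p : (1:ℝ) + y ≠ 0 := by linarith
        have h1m : (1:ℝ) - y ≠ 0 := by linarith
        have d1 : HasDerivAt (fun y : ℝ => Real.log (1 + y)) (1 / (1 + y)) y := by
          have : HasDerivAt (fun y : ℝ => 1 + y) 1 y := (hasDerivAt_id y).const_add 1
          simpa using this.log h1p
        have d2 : HasDerivAt (fun y : ℝ => Real.log (1 - y)) (-1 / (1 - y)) y := by
          have : HasDerivAt (fun y : ℝ => 1 - y) (-1) y := by
            exact (hasDerivAt_id' y).const_sub 1
          simpa using this.log h1m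
        have d3 : HasDerivAt (fun y : ℝ => Real.log (1 + y) - Real.log (1 - y) - 2 * y)
            (1 / (1 + y) - (-1 / (1 - y)) - 2) y := by
          have d4 : HasDerivAt (fun y : ℝ => 2 * y) 2 y := by simpa using (hasDerivAt_id y).const_mul 2
          exact (d1.sub d2).sub d4
        rw [d3.deriv]
        have h1p' : (0:ℝ) < 1 + y := by linarith
        have h1m' : (0:ℝ) < 1 - y := by linarith
        rw [sub_nonneg]
        have key2 : 1 / (1 + y) - -1 / (1 - y) = 2 / ((1 + y) * (1 - y)) := by
          field_simp
          ring
        rw [key2, le_div_iff₀ (by nlinarith)]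
        nlinarith
      apply monotoneOn_of_deriv_nonneg (convex_Ico 0 1) ?_ ?_ hderiv
      · apply ContinuousOn.sub
        apply ContinuousOn.sub
        · exact Real.continuousOn_log.comp (by fun_prop) (by intro y hy; simp only [Set.mem_Ico] at hy; simp; intro h; linarith [hy.1])
        · exact Real.continuousOn_log.comp (by fun_prop) (by intro y hy; simp only [Set.mem_Ico] at hy; simp; intro h; linarith [hy.2])
        · fun_prop
      · intro y hy
        rw [interior_Ico] at hy
        obtain ⟨hy0, hy1⟩ := hy
        have h1p : (1:ℝ) + y ≠ 0 := by linarith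
        have h1m : (1:ℝ) - y ≠ 0 := by linarith
        apply DifferentiableAt.differentiableWithinAt
        apply DifferentiableAt.sub
        apply DifferentiableAt.sub
        · exact (Real.differentiableAt_log h1p).comp y (by fun_prop)
        · exact (Real.differentiableAt_log h1m).comp y (by fun_prop)
        · fun_prop
    intro y hy
    have := hmono (Set.mem_Ico.mpr ⟨le_refl 0, one_pos⟩) hy hy.1
    simp at this
    linarith [this]
  have := key x ⟨h0, h1⟩
  unfold artanh
  rw [Real.log_div (by linarith) (by linarith)]
  linarith


def stepT (p : (ℤ × ℤ) × (ℤ × ℤ)) (b : Bool) : (ℤ × ℤ) × (ℤ × ℤ) :=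
  if b then (p.1 + p.2, p.2) else (p.1, p.1 + p.2)

def node : List Bool → (ℤ × ℤ) × (ℤ × ℤ)
  | [] => ((1, 0), (0, 1))
  | b :: w => stepT (node w) b

lemma node_mem (w : List Bool) : node w ∈ S := by
  induction w with
  | nil => simp [node, S]
  | cons b w ih =>
    obtain ⟨h1, h2, h3, h4, h5⟩ := ih
    cases b <;>
      simp only [node, stepT, if_true, if_false, Bool.false_eq_true] <;>
      refine ⟨?_, ?_, ?_, ?_, ?_⟩ <;> simp [Prod.fst_add, Prod.snd_add] <;> nlinarith

lemma node_ne_zero (w : List Bool) :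
    ((node w).1 ≠ 0) ∧ ((node w).2 ≠ 0) := by
  obtain ⟨h1, h2, h3, h4, h5⟩ := node_mem w
  constructor <;> intro h <;> rw [Prod.ext_iff] at h <;> simp at h <;>
    rw [h.1, h.2] at h5 <;> simp at h5

lemma node_injective : Function.Injective node := by
  intro w1
  induction w1 with
  | nil =>
    intro w2 h
    cases w2 with
    | nil => rfl
    | cons b w =>
      exfalso
      obtain ⟨h1, h2, h3, h4, h5⟩ := node_mem w
      cases b <;> simp only [node, stepT, if_true, if_false, Bool.false_eq_true] at h <;>
        rw [Prod.ext_iff, Prod.ext_iff, Prod.ext_iff] at h <;>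
        simp [Prod.fst_add, Prod.snd_add] at h <;> omega
  | cons b1 w1 ih =>
    intro w2 h
    cases w2 with
    | nil =>
      exfalso
      obtain ⟨h1, h2, h3, h4, h5⟩ := node_mem w1
      cases b1 <;> simp only [node, stepT, if_true, if_false, Bool.false_eq_true] at h <;>
        rw [Prod.ext_iff, Prod.ext_iff, Prod.ext_iff] at h <;>
        simp [Prod.fst_add, Prod.snd_add] at h <;> omega
    | cons b2 w2 =>
      obtain ⟨h1, h2, h3, h4, h5⟩ := node_mem w1
      obtain ⟨g1, g2, g3, g4, g5⟩ := node_mem w2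
      have hb : b1 = b2 ∧ node w1 = node w2 := by
        cases b1 <;> cases b2 <;>
          simp only [node, stepT, if_true, if_false, Bool.false_eq_true] at h <;>
          rw [Prod.ext_iff, Prod.ext_iff, Prod.ext_iff] at h <;>
          simp only [Prod.fst_add, Prod.snd_add] at h
        · exact ⟨rfl, by rw [Prod.ext_iff, Prod.ext_iff, Prod.ext_iff]; refine ⟨⟨by omega, by omega⟩, by omega, by omega⟩⟩
        · exfalso
          have ha : (node w2).1.1 = 0 ∧ (node w2).1.2 = 0 := by omega
          rw [ha.1, ha.2] at g5; simp at g5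
        · exfalso
          have ha : (node w2).2.1 = 0 ∧ (node w2).2.2 = 0 := by omega
          rw [ha.1, ha.2] at g5; simp at g5
        · exact ⟨rfl, by rw [Prod.ext_iff, Prod.ext_iff, Prod.ext_iff]; refine ⟨⟨by omega, by omega⟩, by omega, by omega⟩⟩
      rw [hb.1, ih hb.2]

lemma node_surjective_aux : ∀ n : ℕ, ∀ p : (ℤ × ℤ) × (ℤ × ℤ), p ∈ S →
    (p.1.1 + p.1.2 + p.2.1 + p.2.2).toNat ≤ n → ∃ w, node w = p := by
  intro n
  induction n with
  | zero =>
    rintro ⟨⟨x1, x2⟩, ⟨y1, y2⟩⟩ ⟨h1, h2, h3, h4, h5⟩ hn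
    simp only at h1 h2 h3 h4 h5 hn
    exfalso
    have hx : x1 = 0 ∧ x2 = 0 := by omega
    rw [hx.1, hx.2] at h5; simp at h5
  | succ n ih =>
    rintro ⟨⟨x1, x2⟩, ⟨y1, y2⟩⟩ ⟨h1, h2, h3, h4, h5⟩ hn
    simp only at h1 h2 h3 h4 h5 hn
    have hxnz : ¬(x1 = 0 ∧ x2 = 0) := by
      rintro ⟨e1, e2⟩; rw [e1, e2] at h5; simp at h5
    have hynz : ¬(y1 = 0 ∧ y2 = 0) := by
      rintro ⟨e1, e2⟩; rw [e1, e2] at h5; simp at h5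
    by_cases hc1 : x1 ≤ y1 ∧ x2 ≤ y2
    · have hq : ((x1, x2), (y1 - x1, y2 - x2)) ∈ S :=
        ⟨h1, h2, by simp; omega, by simp; omega, by simp; linear_combination h5⟩
      obtain ⟨w, hw⟩ := ih ((x1, x2), (y1 - x1, y2 - x2)) hq (by simp; omega)
      refine ⟨false :: w, ?_⟩
      simp [node, stepT, hw, Prod.ext_iff]
    · by_cases hc2 : y1 ≤ x1 ∧ y2 ≤ x2
      · have hq : ((x1 - y1, x2 - y2), (y1, y2)) ∈ S :=
          ⟨by simp; omega, by simp; omega, h3, h4, by simp; linear_combination h5⟩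
        obtain ⟨w, hw⟩ := ih ((x1 - y1, x2 - y2), (y1, y2)) hq (by simp; omega)
        refine ⟨true :: w, ?_⟩
        simp [node, stepT, hw, Prod.ext_iff]
      · -- mixed case: p is the root
        refine ⟨[], ?_⟩
        have hroot : x1 = 1 ∧ x2 = 0 ∧ y1 = 0 ∧ y2 = 1 := by
          push_neg at hc1 hc2
          rcases le_or_gt x1 y1 with hle | hlt
          · exfalso
            have hy2 : y2 < x2 := hc1 hle
            nlinarith
          · have hx2 : x2 < y2 := hc2 (by omega)
            have e1 : x2 = 0 ∧ y1 = 0 := by constructor <;> nlinarith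
            have e2 : x1 * y2 = 1 := by rw [e1.1, e1.2] at h5; linarith
            have hx1 : 1 ≤ x1 := by nlinarith
            have hy2' : 1 ≤ y2 := by nlinarith
            have ex1 : x1 = 1 := by nlinarith
            have ey2 : y2 = 1 := by nlinarith
            omega
        simp [node, hroot.1, hroot.2.1, hroot.2.2.1, hroot.2.2.2]

lemma node_surjective (p : (ℤ × ℤ) × (ℤ × ℤ)) (hp : p ∈ S) : ∃ w, node w = p :=
  node_surjective_aux (p.1.1 + p.1.2 + p.2.1 + p.2.2).toNat p hp le_rfl

lemma sums_inj (p p' : (ℤ × ℤ) × (ℤ × ℤ)) (hp : p ∈ S) (hp' : p' ∈ S)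
    (h1 : p.1.1 + p.1.2 = p'.1.1 + p'.1.2) (h2 : p.2.1 + p.2.2 = p'.2.1 + p'.2.2) :
    p = p' := by
  obtain ⟨⟨x1, x2⟩, ⟨y1, y2⟩⟩ := p
  obtain ⟨⟨a1, a2⟩, ⟨b1, b2⟩⟩ := p'
  obtain ⟨hx1, hx2, hy1, hy2, hdet⟩ := hp
  obtain ⟨ha1, ha2, hb1, hb2, hdet'⟩ := hp'
  simp only at hx1 hx2 hy1 hy2 hdet ha1 ha2 hb1 hb2 hdet' h1 h2
  have k1 : x1 * (y1 + y2) - y1 * (x1 + x2) = 1 := by linear_combination hdet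
  have k2 : a1 * (y1 + y2) - b1 * (x1 + x2) = 1 := by
    linear_combination hdet' + a1 * h2 - b1 * h1
  have key : (x1 + x2) * (x1 * b1 - a1 * y1) = a1 - x1 := by
    linear_combination a1 * k1 - x1 * k2
  have hx1pos : 1 ≤ x1 := by nlinarith
  have ha1pos : 1 ≤ a1 := by nlinarith
  have hk0 : x1 * b1 - a1 * y1 = 0 := by nlinarith
  have e1 : a1 = x1 := by rw [hk0] at key; omega
  have e3 : y1 = b1 := by
    have : (y1 - b1) * (x1 + x2) = 0 := by linear_combination k2 - k1 - (y1 + y2) * e1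
    have hs1 : 1 ≤ x1 + x2 := by omega
    nlinarith
  simp only [Prod.mk.injEq]
  refine ⟨⟨by omega, by omega⟩, by omega, by omega⟩


def level : ℕ → Finset (List Bool)
  | 0 => {[]}
  | n + 1 => (level n).image (List.cons false) ∪ (level n).image (List.cons true)

lemma mem_level {n : ℕ} {w : List Bool} : w ∈ level n ↔ w.length = n := by
  induction n generalizing w with
  | zero => cases w <;> simp [level]
  | succ n ih =>
    cases w with
    | nil => simp [level]
    | cons b w =>
      simp only [level, Finset.mem_union, Finset.mem_image, List.length_cons]
      constructor
      · rintro (⟨u, hu, he⟩ | ⟨u, hu, he⟩) <;>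
          (cases he; rw [ih] at hu; omega)
      · intro h
        have hw : w ∈ level n := ih.mpr (by omega)
        cases b
        · exact Or.inl ⟨w, hw, rfl⟩
        · exact Or.inr ⟨w, hw, rfl⟩

def tree (n : ℕ) : Finset (List Bool) := (Finset.range (n + 1)).biUnion level

lemma mem_tree {n : ℕ} {w : List Bool} : w ∈ tree n ↔ w.length ≤ n := by
  simp only [tree, Finset.mem_biUnion, Finset.mem_range, mem_level]
  constructor
  · rintro ⟨k, hk, rfl⟩; omega
  · intro h; exact ⟨w.length, by omega, rfl⟩

lemma sum_level_succ (F : List Bool → ℝ) (n : ℕ) :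
    ∑ w ∈ level (n + 1), F w = ∑ w ∈ level n, (F (false :: w) + F (true :: w)) := by
  have hdisj : Disjoint ((level n).image (List.cons false))
      ((level n).image (List.cons true)) := by
    simp only [Finset.disjoint_left, Finset.mem_image]
    rintro a ⟨u, _, rfl⟩ ⟨v, _, hv⟩
    simp at hv
  have hinj : ∀ b : Bool, Set.InjOn (List.cons b) (level n) := by
    intro b u _ v _ h; simpa using h
  rw [show level (n+1) = (level n).image (List.cons false) ∪ (level n).image (List.cons true) from rfl]
  rw [Finset.sum_union hdisj, Finset.sum_image (hinj false), Finset.sum_image (hinj true),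
    Finset.sum_add_distrib]

lemma sum_tree (t F : List Bool → ℝ)
    (ht : ∀ w, t w = F w - F (false :: w) - F (true :: w)) (n : ℕ) :
    ∑ w ∈ tree n, t w = F [] - ∑ w ∈ level (n + 1), F w := by
  have hdisj : ((Finset.range (n+1) : Finset ℕ) : Set ℕ).PairwiseDisjoint level := by
    intro a _ b _ hab
    simp only [Finset.disjoint_left]
    intro w hw hw'
    rw [mem_level] at hw hw'
    omega
  rw [tree, Finset.sum_biUnion hdisj]
  have hlev : ∀ k, ∑ w ∈ level k, t w = (∑ w ∈ level k, F w) - ∑ w ∈ level (k+1), F w := by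
    intro k
    rw [sum_level_succ, ← Finset.sum_sub_distrib]
    apply Finset.sum_congr rfl
    intro w _
    rw [ht w]; ring
  calc ∑ k ∈ Finset.range (n+1), ∑ w ∈ level k, t w
      = ∑ k ∈ Finset.range (n+1), ((∑ w ∈ level k, F w) - ∑ w ∈ level (k+1), F w) :=
        Finset.sum_congr rfl (fun k _ => hlev k)
    _ = F [] - ∑ w ∈ level (n + 1), F w := by
        rw [Finset.sum_range_sub' (fun k => ∑ w ∈ level k, F w) (n+1)]
        simp [level]




noncomputable def fED (d e : ℝ) : ℝ :=
  (1 / d) * (artanh (Real.sqrt d / e) / Real.sqrt d - 1 / e)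

lemma artanh_div {d e : ℝ} (hd : 0 < d) (he : Real.sqrt d < e) :
    artanh (Real.sqrt d / e) =
      (1 / 2) * Real.log ((e + Real.sqrt d) / (e - Real.sqrt d)) := by
  have hs : 0 < Real.sqrt d := Real.sqrt_pos.mpr hd
  have he0 : 0 < e := lt_trans hs he
  unfold artanh
  congr 1
  congr 1
  field_simp

lemma tele {d e1 a b : ℝ} (hd : 0 < d)
    (h1 : Real.sqrt d < e1) (h2 : Real.sqrt d < e1 + 2 * a) (h3 : Real.sqrt d < e1 + 2 * b)
    (hab : e1 ^ 2 - 4 * (a * b) = d) :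
    fED d e1 = 1 / (e1 * (e1 + 2 * a) * (e1 + 2 * b)) + fED d (e1 + 2 * a) + fED d (e1 + 2 * b) := by
  set s := Real.sqrt d with hsdef
  have hs : 0 < s := Real.sqrt_pos.mpr hd
  have hsd : s ^ 2 = d := Real.sq_sqrt hd.le
  set e2 := e1 + 2 * a with he2
  set e3 := e1 + 2 * b with he3
  have h10 : 0 < e1 := lt_trans hs h1
  have h20 : 0 < e2 := lt_trans hs h2
  have h30 : 0 < e3 := lt_trans hs h3
  have hm1 : 0 < e1 - s := by linarith
  have hm2 : 0 < e2 - s := by linarith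
  have hm3 : 0 < e3 - s := by linarith
  have hp1 : 0 < e1 + s := by linarith
  have hp2 : 0 < e2 + s := by linarith
  have hp3 : 0 < e3 + s := by linarith
  have prodeq : (e2 + s) / (e2 - s) * ((e3 + s) / (e3 - s)) = (e1 + s) / (e1 - s) := by
    rw [div_mul_div_comm, div_eq_div_iff (by positivity) (ne_of_gt hm1)]
    linear_combination (2 * s) * hab - (2 * s) * hsd + (2 * s * e1 + 2 * s * s) * (0 : ℝ)
  have logeq : Real.log ((e1 + s) / (e1 - s)) =
      Real.log ((e2 + s) / (e2 - s)) + Real.log ((e3 + s) / (e3 - s)) := by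
    rw [← Real.log_mul (by positivity) (by positivity), prodeq]
  have art : artanh (s / e1) = artanh (s / e2) + artanh (s / e3) := by
    rw [artanh_div hd h1, artanh_div hd h2, artanh_div hd h3, logeq]; ring
  have hkey : e1 * e3 + e1 * e2 - e2 * e3 = d := by
    rw [he2, he3]; linear_combination hab
  have rateq : (1 / d) * (1 / e2 + 1 / e3 - 1 / e1) = 1 / (e1 * e2 * e3) := by
    rw [div_add_div _ _ (ne_of_gt h20) (ne_of_gt h30)]
    rw [show (1 * e3 + e2 * 1) / (e2 * e3) - 1 / e1 = d / (e1 * e2 * e3) by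
      rw [← hkey]; field_simp]
    field_simp
  unfold fED
  rw [art]
  have : (1 / d) * ((artanh (s / e2) + artanh (s / e3)) / s - 1 / e1)
      - (1 / d) * (artanh (s / e2) / s - 1 / e2) - (1 / d) * (artanh (s / e3) / s - 1 / e3)
      = (1 / d) * (1 / e2 + 1 / e3 - 1 / e1) := by ring
  linarith [this, rateq]

lemma fED_nonneg {d e : ℝ} (hd : 0 < d) (he : Real.sqrt d < e) : 0 ≤ fED d e := by
  have hs : 0 < Real.sqrt d := Real.sqrt_pos.mpr hd
  have he0 : 0 < e := lt_trans hs he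
  have hx0 : 0 ≤ Real.sqrt d / e := by positivity
  have hx1 : Real.sqrt d / e < 1 := (div_lt_one he0).mpr he
  have h := artanh_lower hx0 hx1
  have : 1 / e ≤ artanh (Real.sqrt d / e) / Real.sqrt d := by
    rw [le_div_iff₀ hs]
    calc 1 / e * Real.sqrt d = Real.sqrt d / e := by ring
      _ ≤ artanh (Real.sqrt d / e) := h
  unfold fED
  have hd' : 0 < 1 / d := by positivity
  nlinarith

lemma fED_le {d e bb : ℝ} (hd : 0 < d) (hb : Real.sqrt d < bb) (hbe : bb ≤ e) :
    fED d e ≤ Real.sqrt d / (d * (1 - Real.sqrt d / bb)) * (1 / e ^ 2) := by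
  have hs : 0 < Real.sqrt d := Real.sqrt_pos.mpr hd
  have hb0 : 0 < bb := lt_trans hs hb
  have he0 : 0 < e := lt_of_lt_of_le hb0 hbe
  have hsd : Real.sqrt d ^ 2 = d := Real.sq_sqrt hd.le
  set s := Real.sqrt d
  set x := s / e with hx
  have hx0 : 0 ≤ x := by positivity
  have hxb : x ≤ s / bb := by
    rw [hx]; apply div_le_div_of_nonneg_left hs.le hb0 hbe
  have hxb1 : s / bb < 1 := (div_lt_one hb0).mpr hb
  have hx1 : x < 1 := lt_of_le_of_lt hxb hxb1
  have hub := artanh_upper hx0 hx1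
  have hden : 0 < 1 - s / bb := by linarith
  have hden' : 0 < 1 - x := by linarith
  -- artanh x - x ≤ x^2/(1-x) ≤ x^2/(1 - s/bb)
  have step1 : artanh x - x ≤ x ^ 2 / (1 - s / bb) := by
    have e1 : x / (1 - x) - x = x ^ 2 / (1 - x) := by field_simp; ring
    have e2 : x ^ 2 / (1 - x) ≤ x ^ 2 / (1 - s / bb) := by
      apply div_le_div_of_nonneg_left (by positivity) hden
      linarith
    linarith
  have hxs : x / s = 1 / e := by rw [hx, div_right_comm, div_self (ne_of_gt hs)]
  have hfed : fED d e = (1 / d) * ((artanh x - x) / s) := by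
    unfold fED
    congr 1
    rw [sub_div, hxs]
  rw [hfed]
  have hx2 : x ^ 2 = d / e ^ 2 := by rw [hx, div_pow, hsd]
  calc (1 / d) * ((artanh x - x) / s) ≤ (1 / d) * ((x ^ 2 / (1 - s / bb)) / s) := by
        apply mul_le_mul_of_nonneg_left _ (by positivity)
        apply (div_le_div_iff_of_pos_right hs).mpr step1
    _ = s / (d * (1 - s / bb)) * (1 / e ^ 2) := by
        rw [hx2]
        generalize hg : 1 - s / bb = c at hden ⊢
        have h1 : d ≠ 0 := ne_of_gt hd
        have h2 : s ≠ 0 := ne_of_gt hs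
        have h3 : e ≠ 0 := ne_of_gt he0
        have hcne : c ≠ 0 := ne_of_gt hden
        field_simp
        linear_combination (-1) * hsd


lemma eLab_eq (A B C : ℤ) (x y : ℤ × ℤ) :
    eLab A B C x y = ((2 * A * (x.1 * y.1) + B * (x.1 * y.2 + x.2 * y.1)
      + 2 * C * (x.2 * y.2) : ℤ) : ℝ) := by
  simp only [eLab, q, Prod.fst_add, Prod.snd_add]
  push_cast
  ring

lemma eLab_comm (A B C : ℤ) (x y : ℤ × ℤ) : eLab A B C x y = eLab A B C y x := by
  rw [eLab_eq, eLab_eq]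
  push_cast
  ring

lemma eLab_right (A B C : ℤ) (x y : ℤ × ℤ) :
    eLab A B C x (x + y) = eLab A B C x y + 2 * q A B C x := by
  simp only [eLab, q, Prod.fst_add, Prod.snd_add]
  push_cast
  ring

lemma eLab_left (A B C : ℤ) (x y : ℤ × ℤ) :
    eLab A B C y (x + y) = eLab A B C x y + 2 * q A B C y := by
  simp only [eLab, q, Prod.fst_add, Prod.snd_add]
  push_cast
  ring

lemma eLab_int_bounds {A B C : ℤ} (hA : 0 < A) (hB : 0 < B) (hC : 0 < C)
    {p : (ℤ × ℤ) × (ℤ × ℤ)} (hp : p ∈ S) :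
    B ≤ 2 * A * (p.1.1 * p.2.1) + B * (p.1.1 * p.2.2 + p.1.2 * p.2.1)
        + 2 * C * (p.1.2 * p.2.2) ∧
    (p.1.1 + p.1.2) * (p.2.1 + p.2.2) ≤ 2 * A * (p.1.1 * p.2.1)
        + B * (p.1.1 * p.2.2 + p.1.2 * p.2.1) + 2 * C * (p.1.2 * p.2.2) := by
  obtain ⟨h1, h2, h3, h4, h5⟩ := hp
  constructor
  · nlinarith [mul_nonneg h1 h3, mul_nonneg h2 h4, mul_nonneg h1 h4, mul_nonneg h2 h3]
  · nlinarith [mul_nonneg h1 h3, mul_nonneg h2 h4, mul_nonneg h1 h4, mul_nonneg h2 h3,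
      mul_nonneg (mul_nonneg h1 h3) (sub_nonneg.mpr hA.le), mul_pos hA hB]

lemma eLab_ge_B {A B C : ℤ} (hA : 0 < A) (hB : 0 < B) (hC : 0 < C)
    {p : (ℤ × ℤ) × (ℤ × ℤ)} (hp : p ∈ S) : (B : ℝ) ≤ eLab A B C p.1 p.2 := by
  rw [eLab_eq]
  exact_mod_cast (eLab_int_bounds hA hB hC hp).1

lemma eLab_ge_sums {A B C : ℤ} (hA : 0 < A) (hB : 0 < B) (hC : 0 < C)
    {p : (ℤ × ℤ) × (ℤ × ℤ)} (hp : p ∈ S) :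
    (((p.1.1 + p.1.2) * (p.2.1 + p.2.2) : ℤ) : ℝ) ≤ eLab A B C p.1 p.2 := by
  rw [eLab_eq]
  exact_mod_cast (eLab_int_bounds hA hB hC hp).2

lemma q_nonneg {A B C : ℤ} (hA : 0 < A) (hB : 0 < B) (hC : 0 < C)
    {v : ℤ × ℤ} (h1 : 0 ≤ v.1) (h2 : 0 ≤ v.2) : 0 ≤ q A B C v := by
  have hA' : (0:ℝ) ≤ A := by exact_mod_cast hA.le
  have hB' : (0:ℝ) ≤ B := by exact_mod_cast hB.le
  have hC' : (0:ℝ) ≤ C := by exact_mod_cast hC.le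
  have h1' : (0:ℝ) ≤ v.1 := by exact_mod_cast h1
  have h2' : (0:ℝ) ≤ v.2 := by exact_mod_cast h2
  unfold q
  positivity

lemma eLab_disc (A B C : ℤ) {p : (ℤ × ℤ) × (ℤ × ℤ)} (hp : p ∈ S) :
    (eLab A B C p.1 p.2) ^ 2 - 4 * (q A B C p.1 * q A B C p.2)
      = (B : ℝ) ^ 2 - 4 * A * C := by
  obtain ⟨h1, h2, h3, h4, h5⟩ := hp
  have hdet : ((p.1.1 : ℝ) * p.2.2 - p.1.2 * p.2.1) = 1 := by exact_mod_cast h5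
  simp only [eLab, q, Prod.fst_add, Prod.snd_add]
  push_cast
  linear_combination (((B:ℝ))^2 - 4*A*C) * ((p.1.1 : ℝ) * p.2.2 - p.1.2 * p.2.1 + 1) * hdet

noncomputable def g1 : ℤ → ℝ := fun n => if 0 < n then 1 / (n : ℝ) ^ 2 else 0

lemma g1_nonneg (n : ℤ) : 0 ≤ g1 n := by
  unfold g1; split <;> positivity

lemma summable_g1 : Summable g1 := by
  have hs : Summable fun n : ℤ => 1 / (n : ℝ) ^ 2 :=
    (Real.summable_one_div_int_pow (p := 2)).mpr one_lt_two
  apply Summable.of_nonneg_of_le g1_nonneg _ hs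
  intro n
  unfold g1
  split
  · exact le_refl _
  · positivity

noncomputable def gP : ℤ × ℤ → ℝ := fun p => g1 p.1 * g1 p.2

lemma gP_nonneg (p : ℤ × ℤ) : 0 ≤ gP p := mul_nonneg (g1_nonneg _) (g1_nonneg _)

lemma summable_gP : Summable gP :=
  summable_g1.mul_of_nonneg summable_g1 g1_nonneg g1_nonneg

lemma gP_pos_eq {a b : ℤ} (ha : 0 < a) (hb : 0 < b) :
    gP (a, b) = 1 / ((a : ℝ) * b) ^ 2 := by
  simp only [gP, g1, if_pos ha, if_pos hb]
  rw [mul_pow]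
  rw [one_div, one_div, one_div, mul_inv]


theorem stmt_3 (A B C : ℤ) (hA : 0 < A) (hB : 0 < B) (hC : 0 < C)
    (hD : 0 < B ^ 2 - 4 * A * C) :
    Real.sqrt ((B : ℝ) ^ 2 - 4 * A * C) < (B : ℝ) ∧
    HasSum
      (fun p : S =>
        1 / (eLab A B C p.val.1 p.val.2 * eLab A B C p.val.1 (p.val.1 + p.val.2) *
          eLab A B C p.val.2 (p.val.1 + p.val.2)))
      ((1 / ((B : ℝ) ^ 2 - 4 * A * C)) *
        (artanh (Real.sqrt ((B : ℝ) ^ 2 - 4 * A * C) / (B : ℝ)) /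
            Real.sqrt ((B : ℝ) ^ 2 - 4 * A * C) -
          1 / (B : ℝ))) := by
  set d : ℝ := (B : ℝ) ^ 2 - 4 * A * C with hd
  have hd' : (0:ℝ) < d := by
    rw [hd]; exact_mod_cast hD
  have hB' : (0:ℝ) < B := by exact_mod_cast hB
  have hAC : (0:ℝ) < 4 * (A:ℝ) * C := by
    have hA' : (0:ℝ) < A := by exact_mod_cast hA
    have hC' : (0:ℝ) < C := by exact_mod_cast hC
    positivity
  have hsB : Real.sqrt d < (B:ℝ) := by
    have h1 : d < (B:ℝ)^2 := by rw [hd]; linarith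
    calc Real.sqrt d < Real.sqrt ((B:ℝ)^2) := Real.sqrt_lt_sqrt hd'.le h1
      _ = B := Real.sqrt_sq hB'.le
  refine ⟨hsB, ?_⟩
  -- abbreviations
  set t : List Bool → ℝ := fun w =>
    1 / (eLab A B C (node w).1 (node w).2 * eLab A B C (node w).1 ((node w).1 + (node w).2) *
      eLab A B C (node w).2 ((node w).1 + (node w).2)) with htdef
  set F : List Bool → ℝ := fun w => fED d (eLab A B C (node w).1 (node w).2) with hFdef
  -- edge labels at nodes are at least B
  have hge : ∀ w : List Bool, (B:ℝ) ≤ eLab A B C (node w).1 (node w).2 :=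
    fun w => eLab_ge_B hA hB hC (node_mem w)
  have hsgt : ∀ w : List Bool, Real.sqrt d < eLab A B C (node w).1 (node w).2 :=
    fun w => lt_of_lt_of_le hsB (hge w)
  have hqx : ∀ w : List Bool, 0 ≤ q A B C (node w).1 := by
    intro w
    obtain ⟨h1, h2, _, _, _⟩ := node_mem w
    exact q_nonneg hA hB hC h1 h2
  have hqy : ∀ w : List Bool, 0 ≤ q A B C (node w).2 := by
    intro w
    obtain ⟨_, _, h3, h4, _⟩ := node_mem w
    exact q_nonneg hA hB hC h3 h4
  -- telescoping identity
  have htele : ∀ w : List Bool, t w = F w - F (false :: w) - F (true :: w) := by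
    intro w
    have hF1 : F (false :: w) = fED d (eLab A B C (node w).1 ((node w).1 + (node w).2)) := by
      rw [hFdef]
      simp only [node, stepT, if_false, Bool.false_eq_true]
    have hF2 : F (true :: w) = fED d (eLab A B C (node w).2 ((node w).1 + (node w).2)) := by
      rw [hFdef]
      simp only [node, stepT, if_true]
      rw [eLab_comm]
    have he2 := eLab_right A B C (node w).1 (node w).2
    have he3 := eLab_left A B C (node w).1 (node w).2
    have hdisc := eLab_disc A B C (node_mem w)
    have key := tele (d := d) (e1 := eLab A B C (node w).1 (node w).2)
      (a := q A B C (node w).1) (b := q A B C (node w).2) hd' (hsgt w)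
      (by rw [← he2]; calc Real.sqrt d < eLab A B C (node w).1 (node w).2 := hsgt w
        _ ≤ _ := by rw [he2]; linarith [hqx w]
        )
      (by calc Real.sqrt d < eLab A B C (node w).1 (node w).2 := hsgt w
        _ ≤ _ := by linarith [hqy w])
      (by rw [hd]; exact hdisc)
    have hFw : F w = fED d (eLab A B C (node w).1 (node w).2) := by rw [hFdef]
    have htw : t w = 1 / (eLab A B C (node w).1 (node w).2 *
        eLab A B C (node w).1 ((node w).1 + (node w).2) *
        eLab A B C (node w).2 ((node w).1 + (node w).2)) := by rw [htdef]
    rw [htw, hF1, hF2, hFw, he2, he3, key]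
    ring
  -- nonnegativity
  have hF0 : ∀ w, 0 ≤ F w := fun w => fED_nonneg hd' (hsgt w)
  have ht0 : ∀ w, 0 ≤ t w := by
    intro w
    rw [htdef]
    simp only
    have p1 : (0:ℝ) < eLab A B C (node w).1 (node w).2 := lt_of_lt_of_le hB' (hge w)
    have p2 : (0:ℝ) < eLab A B C (node w).1 ((node w).1 + (node w).2) := by
      rw [eLab_right]; linarith [hqx w]
    have p3 : (0:ℝ) < eLab A B C (node w).2 ((node w).1 + (node w).2) := by
      rw [eLab_left]; linarith [hqy w]
    positivity
  -- domination of F by a summable function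
  set K : ℝ := Real.sqrt d / (d * (1 - Real.sqrt d / B)) with hK
  have hK0 : 0 ≤ K := by
    rw [hK]
    have h1 : (0:ℝ) < 1 - Real.sqrt d / B := by
      rw [sub_pos, div_lt_one hB']; exact hsB
    positivity
  set ι : List Bool → ℤ × ℤ := fun w =>
    ((node w).1.1 + (node w).1.2, (node w).2.1 + (node w).2.2) with hι
  have hsums_pos : ∀ w : List Bool,
      0 < (node w).1.1 + (node w).1.2 ∧ 0 < (node w).2.1 + (node w).2.2 := by
    intro w
    obtain ⟨h1, h2, h3, h4, _⟩ := node_mem w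
    obtain ⟨hx, hy⟩ := node_ne_zero w
    constructor
    · rcases eq_or_lt_of_le h1 with he | he
      · rcases eq_or_lt_of_le h2 with he2 | he2
        · exfalso; apply hx; rw [Prod.ext_iff]; exact ⟨he.symm, he2.symm⟩
        · omega
      · omega
    · rcases eq_or_lt_of_le h3 with he | he
      · rcases eq_or_lt_of_le h4 with he2 | he2
        · exfalso; apply hy; rw [Prod.ext_iff]; exact ⟨he.symm, he2.symm⟩
        · omega
      · omega
  have hFK : ∀ w, F w ≤ K * gP (ι w) := by
    intro w
    obtain ⟨hσ, hτ⟩ := hsums_pos w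
    have hgp : gP (ι w) = 1 / ((((node w).1.1 + (node w).1.2 : ℤ) : ℝ) *
        (((node w).2.1 + (node w).2.2 : ℤ) : ℝ)) ^ 2 := by
      rw [hι]
      exact gP_pos_eq hσ hτ
    have hprod : (1:ℝ) ≤ (((node w).1.1 + (node w).1.2 : ℤ) : ℝ) *
        (((node w).2.1 + (node w).2.2 : ℤ) : ℝ) := by
      have : (1:ℤ) ≤ ((node w).1.1 + (node w).1.2) * ((node w).2.1 + (node w).2.2) := by
        nlinarith
      exact_mod_cast this
    have hle : (((node w).1.1 + (node w).1.2 : ℤ) : ℝ) *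
        (((node w).2.1 + (node w).2.2 : ℤ) : ℝ) ≤ eLab A B C (node w).1 (node w).2 := by
      have := eLab_ge_sums hA hB hC (node_mem w)
      push_cast at this ⊢
      convert this using 2
    have hb := fED_le hd' hsB (hge w)
    rw [hFdef]
    simp only
    calc fED d (eLab A B C (node w).1 (node w).2)
        ≤ K * (1 / (eLab A B C (node w).1 (node w).2) ^ 2) := hb
      _ ≤ K * gP (ι w) := by
          apply mul_le_mul_of_nonneg_left _ hK0
          rw [hgp]
          apply one_div_le_one_div_of_le (by positivity)
          have h1 : (0:ℝ) < (((node w).1.1 + (node w).1.2 : ℤ) : ℝ) *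
              (((node w).2.1 + (node w).2.2 : ℤ) : ℝ) := by linarith
          exact pow_le_pow_left₀ h1.le hle 2
  -- summability of the dominating function
  have hιinj : Function.Injective ι := by
    intro w1 w2 hw
    rw [hι] at hw
    simp only [Prod.mk.injEq] at hw
    exact node_injective (sums_inj _ _ (node_mem w1) (node_mem w2) hw.1 hw.2)
  have hsummable : Summable (fun w => K * gP (ι w)) :=
    (summable_gP.comp_injective hιinj).mul_left K
  -- level sums of the dominating function tend to zero
  have hlevel_dom : Filter.Tendsto (fun n => ∑ w ∈ level n, K * gP (ι w))
      Filter.atTop (nhds 0) := by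
    rw [Metric.tendsto_atTop]
    intro ε hε
    obtain ⟨s, hs⟩ := summable_iff_vanishing_norm.mp hsummable ε hε
    refine ⟨s.sup List.length + 1, fun n hn => ?_⟩
    have hdisj : Disjoint (level n) s := by
      rw [Finset.disjoint_left]
      intro w hw hws
      rw [mem_level] at hw
      have := Finset.le_sup (f := List.length) hws
      omega
    have := hs (level n) hdisj
    rwa [Real.dist_eq, sub_zero, ← Real.norm_eq_abs]
  have hlevelF : Filter.Tendsto (fun n => ∑ w ∈ level n, F w) Filter.atTop (nhds 0) := by
    apply tendsto_of_tendsto_of_tendsto_of_le_of_le tendsto_const_nhds hlevel_dom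
    · intro n
      exact Finset.sum_nonneg fun w _ => hF0 w
    · intro n
      exact Finset.sum_le_sum fun w _ => hFK w
  -- the sum via IsLUB
  have hroot : eLab A B C ((1:ℤ), (0:ℤ)) ((0:ℤ), (1:ℤ)) = (B:ℝ) := by
    rw [eLab_eq]
    norm_num
  have hFnil : F [] = (1 / d) * (artanh (Real.sqrt d / B) / Real.sqrt d - 1 / B) := by
    rw [hFdef]
    simp only [node]
    rw [hroot]
    rfl
  have hasum : HasSum t (F []) := by
    refine hasSum_of_isLUB_of_nonneg (F []) ht0 ⟨?_, ?_⟩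
    · rintro v ⟨sf, rfl⟩
      have hsub : sf ⊆ tree (sf.sup List.length) := by
        intro w hw
        rw [mem_tree]
        exact Finset.le_sup (f := List.length) hw
      calc ∑ w ∈ sf, t w ≤ ∑ w ∈ tree (sf.sup List.length), t w :=
            Finset.sum_le_sum_of_subset_of_nonneg hsub (fun w _ _ => ht0 w)
        _ = F [] - ∑ w ∈ level (sf.sup List.length + 1), F w := sum_tree t F htele _
        _ ≤ F [] := by
            have := Finset.sum_nonneg (fun w (_ : w ∈ level (sf.sup List.length + 1)) => hF0 w)
            linarith
    · intro v hv
      have h1 : ∀ n : ℕ, F [] - ∑ w ∈ level (n + 1), F w ≤ v := by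
        intro n
        have := hv (Set.mem_range_self (tree n))
        rwa [sum_tree t F htele n] at this
      have h2 : Filter.Tendsto (fun n => ∑ w ∈ level (n + 1), F w) Filter.atTop (nhds 0) :=
        hlevelF.comp (Filter.tendsto_add_atTop_nat 1)
      have h3 : F [] - v ≤ 0 := by
        apply ge_of_tendsto' h2
        intro n
        linarith [h1 n]
      linarith
  -- transfer along the bijection
  have hbij : Function.Bijective (fun w : List Bool => (⟨node w, node_mem w⟩ : S)) := by
    constructor
    · intro w1 w2 h
      exact node_injective (congrArg Subtype.val h)
    · rintro ⟨p, hp⟩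
      obtain ⟨w, hw⟩ := node_surjective p hp
      exact ⟨w, Subtype.ext hw⟩
  let E : List Bool ≃ S := Equiv.ofBijective _ hbij
  have hcomp : (fun p : S =>
      1 / (eLab A B C p.val.1 p.val.2 * eLab A B C p.val.1 (p.val.1 + p.val.2) *
        eLab A B C p.val.2 (p.val.1 + p.val.2))) ∘ E = t := by
    rw [htdef]
    funext w
    rfl
  have := (Equiv.hasSum_iff E).mp (by rw [hcomp]; exact hasum)
  rwa [hFnil] at this
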